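/- Let P and Q be probability distributions on a finite set Ω with Q(c) > 0 for every c ∈ Ω. Then lim_{β→0+} D_JSD[β](P‖Q) / β = D_KL(P‖Q). -/

import Mathlib

open Finset

/-- `IsDist P`: `P` is a probability distribution on the finite set `Ω`. -/
def IsDist {Ω : Type*} [Fintype Ω] (P : Ω → ℝ) : Prop :=
  (∀ c, 0 ≤ P c) ∧ ∑ c, P c = 1

/-- Kullback–Leibler divergence `D_KL(P‖Q) = Σ_c P(c) log(P(c)/Q(c))` on a finite set
(with the convention `0 · log 0 = 0`, automatic since `0 * x = 0` in `ℝ`). -/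
noncomputable def klDivFin {Ω : Type*} [Fintype Ω] (P Q : Ω → ℝ) : ℝ :=
  ∑ c, P c * Real.log (P c / Q c)

/-- Generalized Jensen–Shannon divergence
`D_JSD[β](P‖Q) = β·D_KL(P ‖ βP + (1−β)Q) + (1−β)·D_KL(Q ‖ βP + (1−β)Q)`. -/
noncomputable def jsdFin {Ω : Type*} [Fintype Ω] (β : ℝ) (P Q : Ω → ℝ) : ℝ :=
  β * klDivFin P (fun c => β * P c + (1 - β) * Q c)
    + (1 - β) * klDivFin Q (fun c => β * P c + (1 - β) * Q c)

/-- **Small-`β` limit of the generalized Jensen–Shannon divergence:** if `Q(c) > 0` for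
every `c`, then `lim_{β→0⁺} D_JSD[β](P‖Q) / β = D_KL(P‖Q)`. -/
theorem jsd_div_beta_tendsto_kl
    {Ω : Type*} [Fintype Ω] (P Q : Ω → ℝ) (hP : IsDist P) (hQ : IsDist Q)
    (hQpos : ∀ c, 0 < Q c) :
    Filter.Tendsto (fun β : ℝ => jsdFin β P Q / β)
      (nhdsWithin 0 (Set.Ioi 0)) (nhds (klDivFin P Q)) := by
  obtain ⟨hPnn, hPsum⟩ := hP
  obtain ⟨hQnn, hQsum⟩ := hQ
  set M : ℝ → Ω → ℝ := fun β c => β * P c + (1 - β) * Q c with hMdef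
  set h : ℝ → ℝ := fun β => ∑ c, Q c * (Real.log (Q c) - Real.log (M β c)) with hhdef
  -- positivity of the mixture for β ∈ (0,1)
  have hMpos : ∀ β : ℝ, 0 < β → β < 1 → ∀ c, 0 < M β c := by
    intro β hβ0 hβ1 c
    have : 0 ≤ β * P c := mul_nonneg hβ0.le (hPnn c)
    have h2 : 0 < (1 - β) * Q c := mul_pos (by linarith) (hQpos c)
    simp only [hMdef]; linarith
  -- h has derivative 0 at 0
  have hderiv : HasDerivAt h 0 0 := by
    have key : ∀ c : Ω, HasDerivAt (fun β => Q c * (Real.log (Q c) - Real.log (M β c)))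
        (Q c - P c) 0 := by
      intro c
      have hm : HasDerivAt (fun β : ℝ => M β c) (P c - Q c) 0 := by
        have h1 := ((hasDerivAt_id (0:ℝ)).mul_const (P c)).add
          (((hasDerivAt_const (0:ℝ) (1:ℝ)).sub (hasDerivAt_id 0)).mul_const (Q c))
        simp only [hMdef]
        exact h1.congr_deriv (by ring)
      have hM0 : M 0 c = Q c := by simp [hMdef]
      have hlog : HasDerivAt (fun β : ℝ => Real.log (M β c)) ((P c - Q c) / Q c) 0 := by
        have := hm.log (by rw [hM0]; exact (hQpos c).ne')
        rwa [hM0] at this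
      have := ((hasDerivAt_const (0:ℝ) (Real.log (Q c))).sub hlog).const_mul (Q c)
      exact this.congr_deriv (by field_simp [(hQpos c).ne']; ring)
    have hsum := HasDerivAt.fun_sum (u := (univ : Finset Ω)) (fun c _ => key c)
    have : (∑ c, (Q c - P c)) = 0 := by
      rw [Finset.sum_sub_distrib, hPsum, hQsum]; ring
    rw [hhdef]
    simpa [this] using hsum
  have hh0 : h 0 = 0 := by simp [hhdef, hMdef]
  -- h β / β → 0 on 𝓝[>] 0
  have hslope : Filter.Tendsto (fun β => h β / β) (nhdsWithin 0 (Set.Ioi 0)) (nhds 0) := by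
    have := hasDerivAt_iff_tendsto_slope.mp hderiv
    have h2 : Filter.Tendsto (slope h 0) (nhdsWithin 0 (Set.Ioi 0)) (nhds 0) :=
      this.mono_left (nhdsWithin_mono 0 (fun x hx => ne_of_gt hx))
    refine h2.congr (fun β => ?_)
    simp [slope, hh0, div_eq_inv_mul]
  -- klDivFin P (M β) → klDivFin P Q
  have hA : Filter.Tendsto (fun β => klDivFin P (M β)) (nhdsWithin 0 (Set.Ioi 0))
      (nhds (klDivFin P Q)) := by
    have : Filter.Tendsto (fun β => klDivFin P (M β)) (nhds 0) (nhds (klDivFin P Q)) := by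
      unfold klDivFin
      apply tendsto_finset_sum
      intro c _
      by_cases hc : P c = 0
      · simp [hc]
      · have hPc : 0 < P c := lt_of_le_of_ne (hPnn c) (Ne.symm hc)
        have hm : Filter.Tendsto (fun β : ℝ => M β c) (nhds 0) (nhds (Q c)) := by
          have hcont : Continuous (fun β : ℝ => β * P c + (1 - β) * Q c) := by continuity
          have := hcont.tendsto 0
          simpa [hMdef] using this
        have hrat : Filter.Tendsto (fun β : ℝ => P c / M β c) (nhds 0) (nhds (P c / Q c)) :=
          tendsto_const_nhds.div hm (hQpos c).ne'
        have hlog : Filter.Tendsto (fun β : ℝ => Real.log (P c / M β c)) (nhds 0)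
            (nhds (Real.log (P c / Q c))) :=
          (Real.continuousAt_log (div_pos hPc (hQpos c)).ne').tendsto.comp hrat
        exact tendsto_const_nhds.mul hlog
    exact this.mono_left nhdsWithin_le_nhds
  -- assemble
  have hmain : Filter.Tendsto (fun β : ℝ => klDivFin P (M β) + (1 - β) * (h β / β))
      (nhdsWithin 0 (Set.Ioi 0)) (nhds (klDivFin P Q)) := by
    have h1 : Filter.Tendsto (fun β : ℝ => (1 - β) * (h β / β)) (nhdsWithin 0 (Set.Ioi 0))
        (nhds 0) := by
      have hlin : Filter.Tendsto (fun β : ℝ => 1 - β) (nhdsWithin 0 (Set.Ioi 0))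
          (nhds 1) := by
        have : Filter.Tendsto (fun β : ℝ => 1 - β) (nhds (0:ℝ)) (nhds 1) := by
          have hcont : Continuous (fun β : ℝ => 1 - β) := by continuity
          simpa using hcont.tendsto 0
        exact this.mono_left nhdsWithin_le_nhds
      simpa using hlin.mul hslope
    simpa using hA.add h1
  refine hmain.congr' ?_
  have hIoo : Set.Ioo (0:ℝ) 1 ∈ nhdsWithin 0 (Set.Ioi 0) :=
    Ioo_mem_nhdsGT_of_mem (by constructor <;> norm_num)
  filter_upwards [hIoo] with β hβ
  obtain ⟨hβ0, hβ1⟩ := hβ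
  have hβne : β ≠ 0 := hβ0.ne'
  -- rewrite klDivFin Q (M β) as h β
  have hkl : klDivFin Q (M β) = h β := by
    unfold klDivFin
    rw [hhdef]
    apply Finset.sum_congr rfl
    intro c _
    rw [Real.log_div (hQpos c).ne' (hMpos β hβ0 hβ1 c).ne']
  show klDivFin P (M β) + (1 - β) * (h β / β) = jsdFin β P Q / β
  have hj : jsdFin β P Q = β * klDivFin P (M β) + (1 - β) * klDivFin Q (M β) := rfl
  rw [hj, hkl]
  field_simp
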